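/- The number of parking functions of length n is (n+1)^{n-1}. -/

import Mathlib

open Finset

namespace Parking

variable {n : ℕ}

def Nc (f : Fin n → ZMod (n+1)) (k : ZMod (n+1)) : ℕ :=
  (univ.filter fun j => f j = k).card

def Pc (f : Fin n → ZMod (n+1)) (m : ℕ) : ℤ :=
  (∑ k ∈ range m, (Nc f (k : ZMod (n+1)) : ℤ)) - m

lemma sum_Nc (f : Fin n → ZMod (n+1)) : ∑ x : ZMod (n+1), (Nc f x : ℤ) = n := by
  have h := Finset.card_eq_sum_card_fiberwise (s := (univ : Finset (Fin n)))
    (t := (univ : Finset (ZMod (n+1)))) (f := f) (fun j _ => mem_univ _)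
  have : ∑ x : ZMod (n+1), (Nc f x : ℤ) = ((univ : Finset (Fin n)).card : ℤ) := by
    rw [h]; push_cast; rfl
  simpa using this

lemma Pc_zero (f : Fin n → ZMod (n+1)) : Pc f 0 = 0 := by simp [Pc]

lemma Pc_succ (f : Fin n → ZMod (n+1)) (m : ℕ) :
    Pc f (m+1) = Pc f m + (Nc f (m : ZMod (n+1)) : ℤ) - 1 := by
  simp [Pc, Finset.sum_range_succ]; push_cast; ring

lemma Pc_period (f : Fin n → ZMod (n+1)) (m : ℕ) :
    Pc f (m + (n+1)) = Pc f m - 1 := by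
  induction m with
  | zero =>
    have : Pc f (n+1) = (∑ k ∈ range (n+1), (Nc f (k : ZMod (n+1)) : ℤ)) - (n+1) := rfl
    have hs : ∑ k ∈ range (n+1), (Nc f (k : ZMod (n+1)) : ℤ) = ∑ x : ZMod (n+1), (Nc f x : ℤ) :=
      Finset.sum_nbij' (i := fun k => (k : ZMod (n+1))) (j := fun x => x.val)
        (fun k _ => mem_univ _) (fun x _ => mem_range.2 x.val_lt)
        (fun k hk => ZMod.val_natCast_of_lt (mem_range.1 hk))
        (fun x _ => by simp [ZMod.natCast_val, ZMod.cast_id]) (fun k _ => rfl)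
    rw [Nat.zero_add, this, hs, sum_Nc, Pc_zero]; ring
  | succ m ih =>
    have : m + 1 + (n+1) = (m + (n+1)) + 1 := by ring
    rw [this, Pc_succ, ih, Pc_succ]
    have : ((m + (n+1) : ℕ) : ZMod (n+1)) = (m : ZMod (n+1)) := by
      push_cast; simp
    rw [this]; ring

end Parking

namespace Parking

variable {n : ℕ}

/-- The parking condition for a `ZMod (n+1)`-valued function. -/
def Cond (g : Fin n → ZMod (n+1)) : Prop :=
  ∀ i : Fin n, (i : ℕ) + 1 ≤ (univ.filter fun j => (g j).val ≤ (i : ℕ)).card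

instance (g : Fin n → ZMod (n+1)) : Decidable (Cond g) :=
  inferInstanceAs (Decidable (∀ i : Fin n,
    (i : ℕ) + 1 ≤ (univ.filter fun j => (g j).val ≤ (i : ℕ)).card))

lemma mem_arc_iff (t i : ℕ) (hi : i ≤ n) (x : ZMod (n+1)) :
    (x - (t : ZMod (n+1))).val ≤ i ↔
      x ∈ (range (i+1)).image (fun d => ((t + d : ℕ) : ZMod (n+1))) := by
  constructor
  · intro h
    refine mem_image.2 ⟨(x - (t : ZMod (n+1))).val, mem_range.2 (Nat.lt_succ_of_le h), ?_⟩
    push_cast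
    rw [ZMod.natCast_val, ZMod.cast_id]
    ring
  · intro h
    obtain ⟨d, hd, rfl⟩ := mem_image.1 h
    have hdn : d < n + 1 := lt_of_lt_of_le (mem_range.1 hd) (by omega)
    have : ((t + d : ℕ) : ZMod (n+1)) - (t : ZMod (n+1)) = ((d : ℕ) : ZMod (n+1)) := by
      push_cast; ring
    rw [this, ZMod.val_natCast_of_lt hdn]
    have := mem_range.1 hd
    omega

lemma card_filter_eq_sum (f : Fin n → ZMod (n+1)) (A : Finset (ZMod (n+1))) :
    (univ.filter fun j => f j ∈ A).card = ∑ x ∈ A, Nc f x := by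
  rw [Finset.card_eq_sum_card_fiberwise (f := f) (s := univ.filter fun j => f j ∈ A) (t := A)
    (fun j hj => (mem_filter.1 hj).2)]
  refine Finset.sum_congr rfl fun x hx => ?_
  unfold Nc
  congr 1
  rw [filter_filter]
  apply filter_congr
  intro j _
  constructor
  · exact fun h => h.2
  · intro h; exact ⟨h ▸ hx, h⟩

lemma card_translate (f : Fin n → ZMod (n+1)) (t i : ℕ) (hi : i ≤ n) :
    ((univ.filter fun j => (f j - (t : ZMod (n+1))).val ≤ i).card : ℤ)
      = Pc f (t+i+1) - Pc f t + (i+1) := by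
  have h1 : (univ.filter fun j => (f j - (t : ZMod (n+1))).val ≤ i)
      = univ.filter fun j => f j ∈ (range (i+1)).image (fun d => ((t + d : ℕ) : ZMod (n+1))) := by
    apply filter_congr; intro j _
    simpa using mem_arc_iff t i hi (f j)
  rw [h1, card_filter_eq_sum]
  rw [Finset.sum_image (by
    intro d1 h1 d2 h2 he
    have hd1 : d1 < n + 1 := lt_of_lt_of_le (mem_range.1 h1) (by omega)
    have hd2 : d2 < n + 1 := lt_of_lt_of_le (mem_range.1 h2) (by omega)
    have : ((d1 : ℕ) : ZMod (n+1)) = ((d2 : ℕ) : ZMod (n+1)) := by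
      have := he
      push_cast at this ⊢
      exact add_left_cancel this
    have := congrArg ZMod.val this
    rwa [ZMod.val_natCast_of_lt hd1, ZMod.val_natCast_of_lt hd2] at this)]
  have key : ∑ d ∈ range (i+1), (Nc f ((t + d : ℕ) : ZMod (n+1)) : ℤ)
      = ∑ k ∈ Finset.Ico t (t+i+1), (Nc f (k : ZMod (n+1)) : ℤ) := by
    rw [Finset.sum_Ico_eq_sum_range]
    rw [show t + i + 1 - t = i + 1 by omega]
  have split : ∑ k ∈ range t, (Nc f (k : ZMod (n+1)) : ℤ)
      + ∑ k ∈ Finset.Ico t (t+i+1), (Nc f (k : ZMod (n+1)) : ℤ)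
      = ∑ k ∈ range (t+i+1), (Nc f (k : ZMod (n+1)) : ℤ) := by
    simp only [Finset.range_eq_Ico]
    exact Finset.sum_Ico_consecutive _ (Nat.zero_le t) (by omega)
  have : (∑ x ∈ range (i+1), (Nc f ((t + x : ℕ) : ZMod (n+1)) : ℤ)) = (∑ x ∈ range (i+1), Nc f ((t + x : ℕ) : ZMod (n+1)) : ℕ) := by
    push_cast; rfl
  rw [show ((∑ x ∈ range (i+1), Nc f ((t + x : ℕ) : ZMod (n+1)) : ℕ) : ℤ)
      = ∑ x ∈ range (i+1), (Nc f ((t + x : ℕ) : ZMod (n+1)) : ℤ) by push_cast; rfl]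
  rw [key]
  unfold Pc
  push_cast
  linarith [split]

end Parking

namespace Parking

variable {n : ℕ}

lemma cond_shift_iff (f : Fin n → ZMod (n+1)) (t : ℕ) :
    Cond (fun j => f j - (t : ZMod (n+1)))
      ↔ ∀ m, t < m → m ≤ t + n → Pc f t ≤ Pc f m := by
  constructor
  · intro h m h1 h2
    have hin : m - t - 1 < n := by omega
    have := h ⟨m - t - 1, hin⟩
    have hc := card_translate f t (m - t - 1) (by omega)
    rw [show t + (m - t - 1) + 1 = m by omega] at hc
    have : ((m - t - 1 : ℕ) : ℤ) + 1 ≤ ((univ.filter fun j => (f j - (t : ZMod (n+1))).val ≤ (m - t - 1)).card : ℤ) := by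
      exact_mod_cast this
    rw [hc] at this
    linarith
  · intro h i
    have hc := card_translate f t (i : ℕ) (le_of_lt i.isLt)
    have hp := h (t + (i : ℕ) + 1) (by omega) (by have := i.isLt; omega)
    have : ((i : ℕ) : ℤ) + 1 ≤ ((univ.filter fun j => (f j - (t : ZMod (n+1))).val ≤ (i : ℕ)).card : ℤ) := by
      rw [hc]; linarith
    exact_mod_cast this

lemma exists_unique_shift (f : Fin n → ZMod (n+1)) :
    ∃! c : ZMod (n+1), Cond (fun j => f j + c) := by
  -- the "first minimizer" t0
  obtain ⟨t, ht, hmin⟩ := Finset.exists_min_image (range (n+1)) (Pc f) ⟨0, by simp⟩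
  have hex : ∃ t, t ≤ n ∧ ∀ m, m ≤ n → Pc f t ≤ Pc f m := by
    exact ⟨t, Nat.lt_succ_iff.mp (mem_range.1 ht), fun m hm => hmin m (mem_range.2 (by omega))⟩
  set t0 := Nat.find hex with ht0def
  obtain ⟨ht0n, ht0min⟩ := Nat.find_spec hex
  have hlt : ∀ s, s < t0 → Pc f t0 < Pc f s := by
    intro s hs
    have := Nat.find_min hex hs
    push_neg at this
    obtain ⟨m, hm, hms⟩ := this (by omega)
    exact lt_of_le_of_lt (ht0min m hm) hms
  -- W property
  have hW : ∀ m, t0 < m → m ≤ t0 + n → Pc f t0 ≤ Pc f m := by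
    intro m h1 h2
    by_cases hm : m ≤ n
    · exact ht0min m hm
    · have hm' : m - (n+1) < t0 := by omega
      have hp : Pc f m = Pc f (m - (n+1)) - 1 := by
        have := Pc_period f (m - (n+1))
        rwa [show m - (n+1) + (n+1) = m by omega] at this
      rw [hp]
      have := hlt _ hm'
      linarith
  -- uniqueness of t satisfying W
  have hWuniq : ∀ t1 t2, t1 ≤ n → t2 ≤ n →
      (∀ m, t1 < m → m ≤ t1 + n → Pc f t1 ≤ Pc f m) →
      (∀ m, t2 < m → m ≤ t2 + n → Pc f t2 ≤ Pc f m) → t1 = t2 := by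
    intro t1 t2 h1n h2n hW1 hW2
    by_contra hne
    rcases Nat.lt_or_ge t1 t2 with hlt12 | hge
    · have ha := hW1 t2 hlt12 (by omega)
      have hb := hW2 (t1 + n + 1) (by omega) (by omega)
      have hper := Pc_period f t1
      rw [show t1 + (n+1) = t1 + n + 1 by omega] at hper
      linarith
    · have hlt21 : t2 < t1 := by omega
      have ha := hW2 t1 hlt21 (by omega)
      have hb := hW1 (t2 + n + 1) (by omega) (by omega)
      have hper := Pc_period f t2
      rw [show t2 + (n+1) = t2 + n + 1 by omega] at hper
      linarith
  refine ⟨-(t0 : ZMod (n+1)), ?_, ?_⟩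
  · show Cond (fun j => f j + -(t0 : ZMod (n+1)))
    have e : (fun j => f j + -(t0 : ZMod (n+1))) = (fun j => f j - (t0 : ZMod (n+1))) := by
      funext j; rw [sub_eq_add_neg]
    rw [e, cond_shift_iff]
    exact hW
  · intro c hc
    set t' := (-c).val with ht'
    have ht'n : t' ≤ n := by
      have := ZMod.val_lt (-c); omega
    have hct' : c = -(t' : ZMod (n+1)) := by
      rw [ht', ZMod.natCast_val, ZMod.cast_id, neg_neg]
    have : Cond (fun j => f j - (t' : ZMod (n+1))) := by
      have e : (fun j => f j + c) = (fun j => f j - (t' : ZMod (n+1))) := by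
        funext j; rw [hct', sub_eq_add_neg]
      rwa [e] at hc
    rw [cond_shift_iff] at this
    have := hWuniq t' t0 ht'n ht0n this hW
    rw [hct', this]

end Parking

namespace Parking

variable {n : ℕ}

lemma step_A :
    (Finset.univ.filter (fun a : Fin n → Fin n =>
      ∀ i : Fin n, (i : ℕ) + 1 ≤ (Finset.univ.filter (fun j => a j ≤ i)).card)).card
    = (Finset.univ.filter (fun g : Fin n → ZMod (n+1) => Cond g)).card := by
  apply Finset.card_bij (fun a _ => fun j => ((a j : ℕ) : ZMod (n+1)))
  · intro a ha
    rw [mem_filter]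
    refine ⟨mem_univ _, ?_⟩
    intro i
    have ha' := (mem_filter.1 ha).2 i
    have he : (univ.filter fun j => (((a j : ℕ) : ZMod (n+1))).val ≤ (i : ℕ))
        = (univ.filter fun j => a j ≤ i) := by
      apply filter_congr; intro j _
      rw [ZMod.val_natCast_of_lt (lt_trans (a j).isLt (Nat.lt_succ_self n))]
      exact (Fin.le_def).symm
    rw [he]
    exact ha'
  · intro a1 h1 a2 h2 he
    funext j
    have := congrFun he j
    have hv := congrArg ZMod.val this
    rw [ZMod.val_natCast_of_lt (lt_trans (a1 j).isLt (Nat.lt_succ_self n)),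
        ZMod.val_natCast_of_lt (lt_trans (a2 j).isLt (Nat.lt_succ_self n))] at hv
    exact Fin.ext hv
  · intro g hg
    have hgc := (mem_filter.1 hg).2
    have hval : ∀ j, (g j).val < n := by
      intro j
      rcases Nat.eq_zero_or_pos n with h0 | hpos
      · have := j.isLt; omega
      · have hi : n - 1 + 1 ≤ (univ.filter fun j => (g j).val ≤ n - 1).card :=
          hgc ⟨n - 1, by omega⟩
        have hle : (univ.filter fun j => (g j).val ≤ n - 1).card ≤ n := by
          calc (univ.filter fun j => (g j).val ≤ n - 1).card
              ≤ (univ : Finset (Fin n)).card := card_filter_le _ _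
            _ = n := by simp
        have hcard : (univ.filter fun j => (g j).val ≤ n - 1).card = n := by omega
        have huniv : (univ.filter fun j => (g j).val ≤ n - 1) = univ := by
          apply Finset.eq_univ_of_card
          rw [hcard]; simp
        have hj : j ∈ univ.filter fun j => (g j).val ≤ n - 1 := by
          rw [huniv]; exact mem_univ j
        have := (mem_filter.1 hj).2
        omega
    refine ⟨fun j => ⟨(g j).val, hval j⟩, ?_, ?_⟩
    · rw [mem_filter]
      refine ⟨mem_univ _, ?_⟩
      intro i
      have := hgc i
      have he : (univ.filter fun j => (⟨(g j).val, hval j⟩ : Fin n) ≤ i)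
          = (univ.filter fun j => (g j).val ≤ (i : ℕ)) := by
        apply filter_congr; intro j _
        rw [Fin.le_def]
      rw [he]
      exact this
    · funext j
      simp [ZMod.natCast_val, ZMod.cast_id]

lemma step_B :
    (Finset.univ.filter (fun g : Fin n → ZMod (n+1) => Cond g)).card * (n+1)
      = (n+1)^n := by
  have hcard : ((Finset.univ.filter (fun g : Fin n → ZMod (n+1) => Cond g))
      ×ˢ (univ : Finset (ZMod (n+1)))).card
      = (univ : Finset (Fin n → ZMod (n+1))).card := by
    apply Finset.card_bij (fun p _ => fun j => p.1 j + p.2)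
    · intro p _; exact mem_univ _
    · rintro ⟨g1, c1⟩ h1 ⟨g2, c2⟩ h2 he
      have hc1 : Cond g1 := (mem_filter.1 (mem_product.1 h1).1).2
      have hc2 : Cond g2 := (mem_filter.1 (mem_product.1 h2).1).2
      set f : Fin n → ZMod (n+1) := fun j => g1 j + c1 with hf
      have he2 : (fun j => g2 j + c2) = f := he.symm
      have e1 : (fun j => f j + (-c1)) = g1 := by funext j; simp [hf]
      have e2 : (fun j => f j + (-c2)) = g2 := by
        funext j
        have := congrFun he2 j
        rw [← this]; ring
      obtain ⟨c, _, huniq⟩ := exists_unique_shift f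
      have u1 : -c1 = c := huniq _ (show Cond (fun j => f j + (-c1)) by rw [e1]; exact hc1)
      have u2 : -c2 = c := huniq _ (show Cond (fun j => f j + (-c2)) by rw [e2]; exact hc2)
      have hcc : c1 = c2 := by
        have := u1.trans u2.symm
        exact neg_injective this
      have hgg : g1 = g2 := by
        rw [← e1, ← e2, hcc]
      rw [Prod.mk.injEq]
      exact ⟨hgg, hcc⟩
    · intro f _
      obtain ⟨c, hc, _⟩ := exists_unique_shift f
      refine ⟨(fun j => f j + c, -c), ?_, ?_⟩
      · rw [mem_product]
        exact ⟨mem_filter.2 ⟨mem_univ _, hc⟩, mem_univ _⟩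
      · funext j; simp
  rw [Finset.card_product] at hcard
  have h1 : (univ : Finset (ZMod (n+1))).card = n + 1 := by simp
  have h2 : (univ : Finset (Fin n → ZMod (n+1))).card = (n+1)^n := by
    rw [Finset.card_univ, Fintype.card_fun]
    simp
  rw [h1, h2] at hcard
  exact hcard

end Parking

/-- Konheim–Weiss: the number of parking functions of length `n`
(encoded as `a : Fin n → Fin n`, where `a j` stands for preference `a j + 1`,
and the static condition says at least `i + 1` entries are `≤ i`) is `(n+1)^(n-1)`. -/
theorem card_parking_functions (n : ℕ) :
    (Finset.univ.filter (fun a : Fin n → Fin n =>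
      ∀ i : Fin n, (i : ℕ) + 1 ≤ (Finset.univ.filter (fun j => a j ≤ i)).card)).card
      = (n + 1) ^ (n - 1) := by
  rcases Nat.eq_zero_or_pos n with rfl | hpos
  · simp [Finset.filter_true_of_mem]
  · have hA := Parking.step_A (n := n)
    have hB := Parking.step_B (n := n)
    have : (Finset.univ.filter (fun a : Fin n → Fin n =>
      ∀ i : Fin n, (i : ℕ) + 1 ≤ (Finset.univ.filter (fun j => a j ≤ i)).card)).card * (n+1)
        = (n+1)^(n-1) * (n+1) := by
      rw [hA]
      rw [hB]
      rw [← pow_succ]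
      rw [Nat.sub_add_cancel hpos]
    exact Nat.eq_of_mul_eq_mul_right (Nat.succ_pos n) this
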